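/- Let A be a complex C*-algebra, I a set, and a, b : I → A. Suppose the family i ↦ (a i)*(a i) has unconditional sum S ∈ A and the family i ↦ (b i)*(b i) has unconditional sum T ∈ A. Then the family i ↦ (a i)*(b i) has an unconditional sum P ∈ A, and ‖P‖ ≤ ‖S‖^{1/2} · ‖T‖^{1/2}. -/

import Mathlib

open scoped Real

open scoped InnerProductSpace in
lemma cs_fintype_aux {A : Type*} [CStarAlgebra A] {ι : Type*} [Fintype ι] (x y : ι → A) :
    ‖∑ i, star (x i) * y i‖ ≤
      Real.sqrt ‖∑ i, star (x i) * x i‖ * Real.sqrt ‖∑ i, star (y i) * y i‖ := by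
  letI := CStarAlgebra.spectralOrder A
  haveI := CStarAlgebra.spectralOrderedRing A
  let X : WithCStarModule A (∀ _ : ι, A) := (WithCStarModule.equiv _ _).symm (fun i => star (x i))
  let Y : WithCStarModule A (∀ _ : ι, A) := (WithCStarModule.equiv _ _).symm (fun i => star (y i))
  have h := CStarModule.norm_inner_le (A := A) (WithCStarModule A (∀ _ : ι, A)) (x := X) (y := Y)
  rw [← norm_star]
  simpa [X, Y, WithCStarModule.pi_inner, WithCStarModule.pi_norm,
    WithCStarModule.inner_def, star_sum, star_mul] using h

lemma cs_finset_aux {A : Type*} [CStarAlgebra A] {I : Type*} (a b : I → A) (F : Finset I) :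
    ‖∑ i ∈ F, star (a i) * b i‖ ≤
      Real.sqrt ‖∑ i ∈ F, star (a i) * a i‖ * Real.sqrt ‖∑ i ∈ F, star (b i) * b i‖ := by
  have h := cs_fintype_aux (fun i : F => a i) (fun i : F => b i)
  simpa [← Finset.sum_attach F] using h

/-- If `∑ (a i)* (a i)` and `∑ (b i)* (b i)` converge unconditionally in a complex
C*-algebra, then so does the pairing `∑ (a i)* (b i)`, with norm bounded by the
product of the square roots of the norms of the two sums. -/
theorem pairing_hasSum_of_hasSum_sq {A : Type*} [CStarAlgebra A]
    {I : Type*} (a b : I → A) (S T : A)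
    (hS : HasSum (fun i => star (a i) * a i) S)
    (hT : HasSum (fun i => star (b i) * b i) T) :
    ∃ P : A, HasSum (fun i => star (a i) * b i) P ∧
      ‖P‖ ≤ Real.sqrt ‖S‖ * Real.sqrt ‖T‖ := by
  have hsum : Summable (fun i => star (a i) * b i) := by
    classical
    rw [summable_iff_vanishing_norm]
    intro ε hε
    obtain ⟨s₁, hs₁⟩ := summable_iff_vanishing_norm.mp hS.summable ε hε
    obtain ⟨s₂, hs₂⟩ := summable_iff_vanishing_norm.mp hT.summable ε hε
    refine ⟨s₁ ∪ s₂, fun t ht => ?_⟩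
    have h1 := hs₁ t (ht.mono_right le_sup_left)
    have h2 := hs₂ t (ht.mono_right le_sup_right)
    calc ‖∑ i ∈ t, star (a i) * b i‖
        ≤ Real.sqrt ‖∑ i ∈ t, star (a i) * a i‖ * Real.sqrt ‖∑ i ∈ t, star (b i) * b i‖ :=
          cs_finset_aux a b t
      _ < Real.sqrt ε * Real.sqrt ε :=
          mul_lt_mul'' (Real.sqrt_lt_sqrt (norm_nonneg _) h1)
            (Real.sqrt_lt_sqrt (norm_nonneg _) h2) (Real.sqrt_nonneg _) (Real.sqrt_nonneg _)
      _ = ε := Real.mul_self_sqrt hε.le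
  obtain ⟨P, hP⟩ := hsum
  refine ⟨P, hP, ?_⟩
  have hN : Filter.Tendsto (fun F : Finset I => ‖∑ i ∈ F, star (a i) * b i‖)
      Filter.atTop (nhds ‖P‖) := (continuous_norm.tendsto P).comp hP
  have hA : Filter.Tendsto (fun F : Finset I => Real.sqrt ‖∑ i ∈ F, star (a i) * a i‖)
      Filter.atTop (nhds (Real.sqrt ‖S‖)) :=
    (Real.continuous_sqrt.tendsto _).comp ((continuous_norm.tendsto S).comp hS)
  have hB : Filter.Tendsto (fun F : Finset I => Real.sqrt ‖∑ i ∈ F, star (b i) * b i‖)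
      Filter.atTop (nhds (Real.sqrt ‖T‖)) :=
    (Real.continuous_sqrt.tendsto _).comp ((continuous_norm.tendsto T).comp hT)
  exact le_of_tendsto_of_tendsto' hN (hA.mul hB) (fun F => cs_finset_aux a b F)
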